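/- Let L be a language all of whose relation symbols are unary (and with no function or constant symbols), and let T be a complete L-theory whose models are infinite. Then T is approximated by the family of complete L-theories T' such that T' has a finite model and all but finitely many relation symbols of L are interpreted in models of T' as either the empty set or the whole universe; in particular, T is pseudo-finite (every sentence of T has a finite model). -/

import Mathlib

open FirstOrder Language Set

universe u v

namespace Approx

variable {L : FirstOrder.Language.{u, v}}

/-- A complete theory: a satisfiable set of sentences deciding every sentence. -/
def CompleteTheory (T : L.Theory) : Prop :=
  T.IsSatisfiable ∧ ∀ φ : L.Sentence, φ ∈ T ∨ φ.not ∈ T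

/-- `T` is `𝒯`-approximated: `T ∉ 𝒯` and every sentence of `T` lies in some member of `𝒯`. -/
def Approximated (𝒯 : Set L.Theory) (T : L.Theory) : Prop :=
  T ∉ 𝒯 ∧ ∀ φ ∈ T, ∃ T' ∈ 𝒯, φ ∈ T'

/-- The `φ`-neighbourhood `𝒯_φ` of a family of theories. -/
def Nbhd (𝒯 : Set L.Theory) (φ : L.Sentence) : Set L.Theory :=
  {T' ∈ 𝒯 | φ ∈ T'}

/-- An accumulation point of `𝒯`: a complete theory each of whose sentences has an
infinite neighbourhood in `𝒯`. -/
def AccPoint (𝒯 : Set L.Theory) (T : L.Theory) : Prop :=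
  CompleteTheory T ∧ ∀ φ ∈ T, (Nbhd 𝒯 φ).Infinite

/-- The `E`-closure of `𝒯`: `𝒯` together with all its accumulation points. -/
def ClE (𝒯 : Set L.Theory) : Set L.Theory :=
  𝒯 ∪ {T | AccPoint 𝒯 T}

open FirstOrder.Language.BoundedFormula in
/-- The sentence asserting that the unary relation `r` holds of every element. -/
def allSentence {L : FirstOrder.Language.{u, v}} (r : L.Relations 1) : L.Sentence :=
  ∀' (r.boundedFormula₁ (&0))

open FirstOrder.Language.BoundedFormula in
/-- The sentence asserting that the unary relation `r` holds of no element. -/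
def emptySentence {L : FirstOrder.Language.{u, v}} (r : L.Relations 1) : L.Sentence :=
  ∀' (∼(r.boundedFormula₁ (&0)))

/-! ### Auxiliary material for the proof -/

universe w

/-- The set of relation symbols occurring in a bounded formula, coded in the sigma type. -/
def relsIn : ∀ {n}, L.BoundedFormula Empty n → Set (Σ k, L.Relations k)
  | _, BoundedFormula.falsum => ∅
  | _, BoundedFormula.equal _ _ => ∅
  | _, @BoundedFormula.rel _ _ _ _ R _ => {⟨_, R⟩}
  | _, BoundedFormula.imp f g => relsIn f ∪ relsIn g
  | _, BoundedFormula.all f => relsIn f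

/-- The quantifier depth of a bounded formula. -/
def depth : ∀ {n}, L.BoundedFormula Empty n → ℕ
  | _, BoundedFormula.imp f g => max (depth f) (depth g)
  | _, BoundedFormula.all f => depth f + 1
  | _, _ => 0

lemma relsIn_finite : ∀ {n} (ψ : L.BoundedFormula Empty n), (relsIn ψ).Finite
  | _, BoundedFormula.falsum => Set.finite_empty
  | _, BoundedFormula.equal _ _ => Set.finite_empty
  | _, @BoundedFormula.rel _ _ _ _ _ _ => Set.finite_singleton _
  | _, BoundedFormula.imp f g => (relsIn_finite f).union (relsIn_finite g)
  | _, BoundedFormula.all f => relsIn_finite f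

lemma term_eq_var [L.IsRelational] {n : ℕ} (t : L.Term (Empty ⊕ Fin n)) :
    ∃ i : Fin n, t = Term.var (Sum.inr i) := by
  cases t with
  | var i =>
    cases i with
    | inl e => exact e.elim
    | inr i => exact ⟨i, rfl⟩
  | func f _ => exact isEmptyElim f

/-- Realization of a formula is invariant under bijections preserving the relevant
unary relations. -/
lemma realize_swap [L.IsRelational] (hunary : ∀ n, n ≠ 1 → IsEmpty (L.Relations n))
    {M : Type w} [L.Structure M] (Sc : Set (Σ k, L.Relations k)) (σ : M ≃ M)
    (hσ : ∀ r : L.Relations 1, (⟨1, r⟩ : Σ k, L.Relations k) ∈ Sc → ∀ x : M,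
      Structure.RelMap r ![x] ↔ Structure.RelMap r ![σ x]) :
    ∀ {n} (ψ : L.BoundedFormula Empty n), relsIn ψ ⊆ Sc →
      ∀ (v : Empty → M) (xs : Fin n → M),
        ψ.Realize v xs ↔ ψ.Realize (σ ∘ v) (σ ∘ xs) := by
  intro n ψ
  induction ψ with
  | falsum => intro _ v xs; simp [BoundedFormula.Realize]
  | equal t₁ t₂ =>
    intro _ v xs
    obtain ⟨i₁, rfl⟩ := term_eq_var t₁
    obtain ⟨i₂, rfl⟩ := term_eq_var t₂
    simp only [BoundedFormula.Realize, Term.realize, Sum.elim_inr, Function.comp_apply]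
    exact σ.injective.eq_iff.symm
  | @rel _ l R ts =>
    intro hsub v xs
    match l, R, ts, hsub with
    | 0, R, ts, hsub => exact ((hunary 0 (by decide)).elim R)
    | 1, R, ts, hsub =>
      have hmem : (⟨1, R⟩ : Σ k, L.Relations k) ∈ Sc := hsub rfl
      choose j hj using fun i => term_eq_var (ts i)
      simp only [BoundedFormula.Realize]
      have e1 : ∀ (v' : Empty → M) (w : Fin _ → M),
          (fun i : Fin 1 => Term.realize (Sum.elim v' w) (ts i)) = ![w (j 0)] := by
        intro v' w; funext i
        have hi : i = 0 := Subsingleton.elim _ _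
        subst hi
        rw [hj 0]
        simp [Term.realize]
      rw [e1 v xs, e1 (σ ∘ v) (σ ∘ xs)]
      exact hσ R hmem (xs (j 0))
    | (k+2), R, ts, hsub => exact ((hunary (k+2) (by omega)).elim R)
  | imp f g ihf ihg =>
    intro hsub v xs
    have h1 : relsIn f ⊆ Sc := (Set.union_subset_iff.mp hsub).1
    have h2 : relsIn g ⊆ Sc := (Set.union_subset_iff.mp hsub).2
    simp only [BoundedFormula.realize_imp, ihf h1 v xs, ihg h2 v xs]
  | all f ih =>
    intro hsub v xs
    simp only [BoundedFormula.realize_all]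
    constructor
    · intro h a
      have := (ih hsub v (Fin.snoc xs (σ.symm a))).mp (h (σ.symm a))
      rwa [Fin.comp_snoc, Equiv.apply_symm_apply] at this
    · intro h a
      have := h (σ a)
      rw [← Fin.comp_snoc] at this
      exact (ih hsub v (Fin.snoc xs a)).mpr this

/-- The structure on a subset of `M` keeping only the relations in `Sc`. -/
def maskedStructure [L.IsRelational] (Sc : Set (Σ k, L.Relations k)) {M : Type w} [L.Structure M]
    (N : Set M) : L.Structure ↥N where
  funMap := fun {_} f _ => isEmptyElim f
  RelMap := fun {n} r x => (⟨n, r⟩ : Σ k, L.Relations k) ∈ Sc ∧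
    Structure.RelMap r fun i => ((x i : M))

/-- The key transfer lemma: a structure `NN` mapping into `M`, realizing the same
relevant unary relations, and rich enough to find witnesses of each type, satisfies
the same formulas of bounded depth as `M`. -/
lemma realize_transfer [L.IsRelational] (hunary : ∀ n, n ≠ 1 → IsEmpty (L.Relations n))
    {M : Type w} [L.Structure M] {NN : Type w} [L.Structure NN]
    (Sc : Set (Σ k, L.Relations k)) (q : ℕ) (f : NN → M) (hinj : Function.Injective f)
    (hrel : ∀ r : L.Relations 1, (⟨1, r⟩ : Σ k, L.Relations k) ∈ Sc → ∀ x : NN,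
      (Structure.RelMap r ![x] ↔ Structure.RelMap r ![f x]))
    (H : ∀ (b : M) (G : Finset M), b ∉ G → G.card < q →
      ∃ b' : NN, f b' ∉ G ∧ ∀ r : L.Relations 1, (⟨1, r⟩ : Σ k, L.Relations k) ∈ Sc →
        (Structure.RelMap r ![b] ↔ Structure.RelMap r ![f b'])) :
    ∀ {n} (ψ : L.BoundedFormula Empty n), relsIn ψ ⊆ Sc → depth ψ + n ≤ q →
      ∀ (v : Empty → NN) (xs : Fin n → NN),
        ψ.Realize v xs ↔ ψ.Realize (f ∘ v) (f ∘ xs) := by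
  intro n ψ
  induction ψ with
  | falsum => intro _ _ v xs; simp [BoundedFormula.Realize]
  | equal t₁ t₂ =>
    intro _ _ v xs
    obtain ⟨i₁, rfl⟩ := term_eq_var t₁
    obtain ⟨i₂, rfl⟩ := term_eq_var t₂
    simp only [BoundedFormula.Realize, Term.realize, Sum.elim_inr, Function.comp_apply]
    exact hinj.eq_iff.symm
  | @rel _ l R ts =>
    intro hsub _ v xs
    match l, R, ts, hsub with
    | 0, R, ts, hsub => exact ((hunary 0 (by decide)).elim R)
    | 1, R, ts, hsub =>
      have hmem : (⟨1, R⟩ : Σ k, L.Relations k) ∈ Sc := hsub rfl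
      choose j hj using fun i => term_eq_var (ts i)
      simp only [BoundedFormula.Realize]
      have e1 : ∀ (X : Type w) (inst : L.Structure X) (v' : Empty → X) (w : Fin _ → X),
          (fun i : Fin 1 => Term.realize (Sum.elim v' w) (ts i)) = ![w (j 0)] := by
        intro X _ v' w; funext i
        have hi : i = 0 := Subsingleton.elim _ _
        subst hi
        rw [hj 0]
        simp [Term.realize]
      rw [e1 NN _ v xs, e1 M _ (f ∘ v) (f ∘ xs)]
      exact hrel R hmem (xs (j 0))
    | (k+2), R, ts, hsub => exact ((hunary (k+2) (by omega)).elim R)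
  | @imp m g₁ g₂ ih₁ ih₂ =>
    intro hsub hq v xs
    have d1 : depth g₁ + m ≤ q := by simp only [depth] at hq; omega
    have d2 : depth g₂ + m ≤ q := by simp only [depth] at hq; omega
    simp only [BoundedFormula.realize_imp,
      ih₁ (Set.union_subset_iff.mp hsub).1 d1 v xs, ih₂ (Set.union_subset_iff.mp hsub).2 d2 v xs]
  | @all m g ih =>
    intro hsub hq v xs
    have hd : depth g + (m + 1) ≤ q := by simp only [depth] at hq ⊢; omega
    have hmq : m < q := by simp only [depth] at hq; omega
    simp only [BoundedFormula.realize_all]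
    constructor
    · intro h b
      by_cases hb : b ∈ Set.range (f ∘ xs)
      · obtain ⟨i, hi⟩ := hb
        have := (ih hsub hd v (Fin.snoc xs (xs i))).mp (h (xs i))
        rwa [Fin.comp_snoc, show f (xs i) = b from hi] at this
      · classical
        set G : Finset M := Finset.univ.image (f ∘ xs) with hG
        have hbG : b ∉ G := by
          simp only [hG, Finset.mem_image, Finset.mem_univ, true_and]
          rintro ⟨i, hi⟩; exact hb ⟨i, hi⟩
        have hGlt : G.card < q := lt_of_le_of_lt (le_trans (Finset.card_image_le) (by simp)) hmq
        obtain ⟨b', hb'G, hb'typ⟩ := H b G hbG hGlt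
        have hM : BoundedFormula.Realize g (f ∘ v) (Fin.snoc (f ∘ xs) (f b')) := by
          have := (ih hsub hd v (Fin.snoc xs b')).mp (h b')
          rwa [Fin.comp_snoc] at this
        have hbne : ∀ i, f (xs i) ≠ b := fun i hi => hb ⟨i, hi⟩
        have hb'ne : ∀ i, f (xs i) ≠ f b' := by
          intro i hi
          apply hb'G
          simp only [hG, Finset.mem_image, Finset.mem_univ, true_and]
          exact ⟨i, by simpa using hi⟩
        have hσ : ∀ r : L.Relations 1, (⟨1, r⟩ : Σ k, L.Relations k) ∈ Sc → ∀ x : M,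
            Structure.RelMap r ![x] ↔ Structure.RelMap r ![Equiv.swap b (f b') x] := by
          intro r hr x
          rcases eq_or_ne x b with rfl | h1
          · rw [Equiv.swap_apply_left]; exact hb'typ r hr
          rcases eq_or_ne x (f b') with rfl | h2
          · rw [Equiv.swap_apply_right]; exact (hb'typ r hr).symm
          · rw [Equiv.swap_apply_of_ne_of_ne h1 h2]
        have := (realize_swap hunary Sc (Equiv.swap b (f b')) hσ g hsub
          (f ∘ v) (Fin.snoc (f ∘ xs) (f b'))).mp hM
        have e2 : (Equiv.swap b (f b')) ∘ (f ∘ v) = f ∘ v := funext fun e => e.elim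
        have e3 : (Equiv.swap b (f b')) ∘ (Fin.snoc (f ∘ xs) (f b')) = Fin.snoc (f ∘ xs) b := by
          rw [Fin.comp_snoc]
          have e4 : (Equiv.swap b (f b')) ∘ (f ∘ xs) = f ∘ xs :=
            funext fun i => Equiv.swap_apply_of_ne_of_ne (hbne i) (hb'ne i)
          rw [e4, Equiv.swap_apply_right]
        rwa [e2, e3] at this
    · intro h a
      have := h (f a)
      rw [← Fin.comp_snoc] at this
      exact (ih hsub hd v (Fin.snoc xs a)).mpr this

/-- Any sentence with an (arbitrary) model has a finite model in which all relation
symbols not occurring in the sentence are empty. -/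
lemma exists_finite_model [L.IsRelational] (hunary : ∀ n, n ≠ 1 → IsEmpty (L.Relations n))
    {M : Type w} [L.Structure M] [Nonempty M] (φ : L.Sentence) (hφ : M ⊨ φ) :
    ∃ (N : Type w) (str : L.Structure N), Nonempty N ∧ Finite N ∧
      (@Sentence.Realize L N str φ) ∧
      ∀ r : L.Relations 1, (⟨1, r⟩ : Σ k, L.Relations k) ∉ relsIn φ →
        @Sentence.Realize L N str (emptySentence r) := by
  classical
  set Sc : Set (Σ k, L.Relations k) := relsIn φ with hSc
  set q : ℕ := depth φ + 1 with hq
  have hScfin : Sc.Finite := relsIn_finite φ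
  haveI : Finite ↥Sc := hScfin.to_subtype
  haveI hsubfin : Finite {r : L.Relations 1 // (⟨1, r⟩ : Σ k, L.Relations k) ∈ Sc} := by
    refine Finite.of_injective (fun r => (⟨⟨1, r.1⟩, r.2⟩ : ↥Sc)) ?_
    intro a b h
    exact Subtype.ext (sigma_mk_injective (Subtype.ext_iff.mp h))
  set tmap : M → ({r : L.Relations 1 // (⟨1, r⟩ : Σ k, L.Relations k) ∈ Sc} → Prop) :=
    fun b r => Structure.RelMap r.1 ![b] with htmap
  set pick : ({r : L.Relations 1 // (⟨1, r⟩ : Σ k, L.Relations k) ∈ Sc} → Prop) → Set M :=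
    fun t => if h : {x : M | tmap x = t}.Finite then {x | tmap x = t}
      else (Set.Infinite.exists_subset_ncard_eq h q).choose with hpick
  have pick_sub : ∀ t, pick t ⊆ {x | tmap x = t} := by
    intro t
    by_cases h : {x : M | tmap x = t}.Finite
    · rw [hpick]; simp only [dif_pos h]
      exact subset_rfl
    · rw [hpick]; simp only [dif_neg h]
      exact (Set.Infinite.exists_subset_ncard_eq h q).choose_spec.1
  have pick_fin : ∀ t, (pick t).Finite := by
    intro t
    by_cases h : {x : M | tmap x = t}.Finite
    · rw [hpick]; simpa only [dif_pos h] using h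
    · rw [hpick]; simp only [dif_neg h]
      exact (Set.Infinite.exists_subset_ncard_eq h q).choose_spec.2.1
  set N : Set M := ⋃ t, pick t with hN
  have hNfin : N.Finite := Set.finite_iUnion pick_fin
  have H : ∀ (b : M) (G : Finset M), b ∉ G → G.card < q →
      ∃ b' : M, b' ∈ N ∧ b' ∉ G ∧ ∀ r : L.Relations 1,
        (⟨1, r⟩ : Σ k, L.Relations k) ∈ Sc →
        (Structure.RelMap r ![b] ↔ Structure.RelMap r ![b']) := by
    intro b G hbG hGq
    by_cases h : {x : M | tmap x = tmap b}.Finite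
    · refine ⟨b, ?_, hbG, fun r hr => Iff.rfl⟩
      have : b ∈ pick (tmap b) := by rw [hpick]; simp only [dif_pos h]; exact rfl
      exact Set.mem_iUnion.mpr ⟨tmap b, this⟩
    · have spec := (Set.Infinite.exists_subset_ncard_eq
        (s := {x : M | tmap x = tmap b}) h q).choose_spec
      set s := (Set.Infinite.exists_subset_ncard_eq
        (s := {x : M | tmap x = tmap b}) h q).choose with hs
      have hnsub : ¬ s ⊆ ↑G := by
        intro hsg
        have h1 := Set.ncard_le_ncard hsg (G.finite_toSet)
        rw [spec.2.2, Set.ncard_coe_finset] at h1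
        omega
      obtain ⟨x, hxs, hxG⟩ := Set.not_subset.mp hnsub
      have hxN : x ∈ N := by
        refine Set.mem_iUnion.mpr ⟨tmap b, ?_⟩
        rw [hpick]
        simp only [dif_neg h]
        exact hxs
      have hxt : tmap x = tmap b := spec.1 hxs
      refine ⟨x, hxN, hxG, fun r hr => ?_⟩
      exact (iff_of_eq (congrFun hxt ⟨r, hr⟩)).symm
  letI str : L.Structure ↥N := maskedStructure Sc N
  have hvec : ∀ (x : ↥N), (fun i : Fin 1 => ((![x] i : M))) = ![(x : M)] := by
    intro x; funext i
    have hi : i = 0 := Subsingleton.elim _ _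
    subst hi; rfl
  have hrel : ∀ r : L.Relations 1, (⟨1, r⟩ : Σ k, L.Relations k) ∈ Sc → ∀ x : ↥N,
      (Structure.RelMap r ![x] ↔ Structure.RelMap r ![(x : M)]) := by
    intro r hr x
    show ((⟨1, r⟩ : Σ k, L.Relations k) ∈ Sc ∧ _) ↔ _
    rw [hvec]
    exact and_iff_right hr
  have hne : Nonempty ↥N := by
    obtain ⟨b', hb'N, -, -⟩ := H (Classical.arbitrary M) ∅ (by simp)
      (by simp only [Finset.card_empty, hq]; omega)
    exact ⟨⟨b', hb'N⟩⟩
  have H' : ∀ (b : M) (G : Finset M), b ∉ G → G.card < q →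
      ∃ b' : ↥N, (b' : M) ∉ G ∧ ∀ r : L.Relations 1,
        (⟨1, r⟩ : Σ k, L.Relations k) ∈ Sc →
        (Structure.RelMap r ![b] ↔ Structure.RelMap r ![(b' : M)]) := by
    intro b G h1 h2
    obtain ⟨b', hb'N, hb'G, hb't⟩ := H b G h1 h2
    exact ⟨⟨b', hb'N⟩, hb'G, hb't⟩
  have key : ∀ (ψ : L.Sentence), relsIn ψ ⊆ Sc → depth ψ ≤ q →
      ((↥N ⊨ ψ) ↔ (M ⊨ ψ)) := by
    intro ψ h1 h2
    have t := realize_transfer hunary Sc q (Subtype.val : ↥N → M) Subtype.val_injective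
      hrel H' ψ h1 (by omega) default default
    have e1 : (Subtype.val : ↥N → M) ∘ (default : Empty → ↥N) = default :=
      Subsingleton.elim _ _
    have e2 : (Subtype.val : ↥N → M) ∘ (default : Fin 0 → ↥N) = default :=
      Subsingleton.elim _ _
    rw [e1, e2] at t
    exact t
  refine ⟨↥N, str, hne, hNfin.to_subtype, (key φ subset_rfl (by omega)).mpr hφ, ?_⟩
  intro r hr
  simp only [emptySentence, Sentence.Realize, Formula.Realize, BoundedFormula.realize_all,
    BoundedFormula.realize_not, BoundedFormula.realize_rel₁]
  intro x h
  exact hr h.1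

/-- a complete theory `T` of a purely unary relational language, all of whose
models are infinite, is approximated by the family of complete theories having a finite model
in which all but finitely many relation symbols are empty or complete; in particular `T`
is pseudo-finite. -/
theorem unary_approximated_by_finite
    {L : FirstOrder.Language.{u, v}} [L.IsRelational]
    (hunary : ∀ n, n ≠ 1 → IsEmpty (L.Relations n))
    (T : L.Theory) (hT : CompleteTheory T)
    (hinf : ∀ M : Theory.ModelType.{u, v, max u v} T, Infinite M) :
    Approximated
      {T' : L.Theory | CompleteTheory T' ∧
        (∃ M : Theory.ModelType.{u, v, max u v} T', Finite M) ∧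
        {r : L.Relations 1 | allSentence r ∉ T' ∧ emptySentence r ∉ T'}.Finite} T ∧
    ∀ φ ∈ T, ∃ M : Theory.ModelType.{u, v, max u v} ({φ} : L.Theory), Finite M := by
  classical
  obtain ⟨M⟩ := hT.1
  have key : ∀ φ ∈ T,
      (∃ T' ∈ {T' : L.Theory | CompleteTheory T' ∧
        (∃ M : Theory.ModelType.{u, v, max u v} T', Finite M) ∧
        {r : L.Relations 1 | allSentence r ∉ T' ∧ emptySentence r ∉ T'}.Finite}, φ ∈ T') ∧
      ∃ Mo : Theory.ModelType.{u, v, max u v} ({φ} : L.Theory), Finite Mo := by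
    intro φ hφ
    have hMφ : (M : Type (max u v)) ⊨ φ := Theory.realize_sentence_of_mem T hφ
    obtain ⟨N, str, hne, hfin, hNφ, hNe⟩ := exists_finite_model hunary φ hMφ
    letI := str
    haveI := hne
    haveI := hfin
    constructor
    · refine ⟨L.completeTheory N, ⟨⟨completeTheory.isSatisfiable L N,
        completeTheory.mem_or_not_mem L N⟩,
        ⟨Theory.ModelType.of _ N, hfin⟩, ?_⟩, mem_completeTheory.mpr hNφ⟩
      refine Set.Finite.subset (Set.Finite.preimage
        (Function.Injective.injOn (sigma_mk_injective)) (relsIn_finite φ)) ?_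
      intro r hr
      by_contra hout
      exact hr.2 (mem_completeTheory.mpr (hNe r hout))
    · haveI : ({φ} : L.Theory).Model N := Theory.model_singleton_iff.mpr hNφ
      exact ⟨Theory.ModelType.of _ N, hfin⟩
  refine ⟨⟨?_, fun φ hφ => (key φ hφ).1⟩, fun φ hφ => (key φ hφ).2⟩
  rintro ⟨-, ⟨M₀, hM₀⟩, -⟩
  haveI := hinf M₀
  haveI := hM₀
  exact not_finite M₀

end Approx
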